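/- Let n and m be positive integers and let X be an m×m matrix with nonnegative integer entries such that every row of X and every column of X sums to n. Then there exist a positive integer r with r ≤ m² − 2m + 2, pairwise distinct m×m permutation matrices P_1,…,P_r, and positive integers z_1,…,z_r with z_1 + ⋯ + z_r = n, such that X = z_1·P_1 + ⋯ + z_r·P_r. -/

import Mathlib

open Finset

/-- An m×m permutation matrix: a 0–1 matrix with exactly one 1 in each row
and each column, i.e. entry (i,j) is 1 exactly when j = σ i for some
permutation σ. -/
def IsPermMatrix {m : ℕ} (P : Matrix (Fin m) (Fin m) ℕ) : Prop :=
  ∃ σ : Equiv.Perm (Fin m), ∀ i j, P i j = if j = σ i then 1 else 0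

/-- Hall's theorem: a positive position matrix has a permutation in its support. -/
lemma exists_perm_in_support {m n : ℕ} (hn : 0 < n)
    (X : Matrix (Fin m) (Fin m) ℕ)
    (hrow : ∀ i, ∑ j, X i j = n) (hcol : ∀ j, ∑ i, X i j = n) :
    ∃ τ : Equiv.Perm (Fin m), ∀ i, 0 < X i (τ i) := by
  classical
  set t : Fin m → Finset (Fin m) := fun i => univ.filter (fun j => 0 < X i j) with ht
  have hall : ∀ s : Finset (Fin m), s.card ≤ (s.biUnion t).card := by
    intro s
    have h1 : ∀ i, ∑ j ∈ t i, X i j = n := by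
      intro i
      rw [← hrow i]
      apply Finset.sum_subset (Finset.subset_univ _)
      intro j _ hj
      simp only [ht, mem_filter, mem_univ, true_and, not_lt] at hj
      omega
    have h2 : s.card * n ≤ (s.biUnion t).card * n := by
      calc s.card * n = ∑ i ∈ s, n := by rw [Finset.sum_const, smul_eq_mul]
        _ = ∑ i ∈ s, ∑ j ∈ t i, X i j := by
            apply Finset.sum_congr rfl; intro i _; rw [h1]
        _ ≤ ∑ i ∈ s, ∑ j ∈ s.biUnion t, X i j := by
            apply Finset.sum_le_sum
            intro i hi
            exact Finset.sum_le_sum_of_subset (Finset.subset_biUnion_of_mem t hi)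
        _ = ∑ j ∈ s.biUnion t, ∑ i ∈ s, X i j := Finset.sum_comm
        _ ≤ ∑ j ∈ s.biUnion t, n := by
            apply Finset.sum_le_sum
            intro j _
            rw [← hcol j]
            exact Finset.sum_le_sum_of_subset (Finset.subset_univ s)
        _ = (s.biUnion t).card * n := by rw [Finset.sum_const, smul_eq_mul]
    exact Nat.le_of_mul_le_mul_right h2 hn
  obtain ⟨f, hfinj, hf⟩ := (Finset.all_card_le_biUnion_card_iff_exists_injective t).mp hall
  refine ⟨Equiv.ofBijective f ((Finite.injective_iff_bijective).mp hfinj), fun i => ?_⟩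
  have := hf i
  simp only [ht, mem_filter] at this
  exact this.2

/-- Greedy decomposition: subtract the minimum along a Hall permutation;
    record a "killed cell" for each step for the triangularity argument. -/
lemma greedy (m : ℕ) (hm : 0 < m) : ∀ n (X : Matrix (Fin m) (Fin m) ℕ),
    (∀ i, ∑ j, X i j = n) → (∀ j, ∑ i, X i j = n) →
    ∃ (r : ℕ) (σ : Fin r → Equiv.Perm (Fin m)) (z : Fin r → ℕ)
      (c : Fin r → Fin m × Fin m),
      (∀ k, 0 < z k) ∧ (∑ k, z k = n) ∧
      (∀ i j, X i j = ∑ k, z k * (if j = σ k i then 1 else 0)) ∧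
      (∀ k i, 0 < X i (σ k i)) ∧
      (∀ k, (c k).2 = σ k ((c k).1)) ∧
      (∀ k l, k < l → (c k).2 ≠ σ l ((c k).1)) := by
  intro n
  induction n using Nat.strong_induction_on with
  | _ n IH =>
    intro X hrow hcol
    rcases Nat.eq_zero_or_pos n with hn0 | hn
    · subst hn0
      refine ⟨0, Fin.elim0, Fin.elim0, Fin.elim0, fun k => k.elim0, by simp, ?_,
        fun k => k.elim0, fun k => k.elim0, fun k l h => k.elim0⟩
      intro i j
      have := Finset.sum_eq_zero_iff.mp (hrow i) j (Finset.mem_univ j)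
      simpa using this
    · obtain ⟨τ, hτ⟩ := exists_perm_in_support hn X hrow hcol
      have hne : (Finset.univ : Finset (Fin m)).Nonempty := ⟨⟨0, hm⟩, Finset.mem_univ _⟩
      obtain ⟨i₀, -, hi₀⟩ := Finset.exists_min_image Finset.univ (fun i => X i (τ i)) hne
      set z₀ := X i₀ (τ i₀) with hz₀
      have hz₀min : ∀ i, z₀ ≤ X i (τ i) := fun i => hi₀ i (Finset.mem_univ i)
      have hz₀pos : 0 < z₀ := hτ i₀
      set X' : Matrix (Fin m) (Fin m) ℕ :=
        fun i j => X i j - z₀ * (if j = τ i then 1 else 0) with hX'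
      have hX'add : ∀ i j, X i j = X' i j + z₀ * (if j = τ i then 1 else 0) := by
        intro i j
        simp only [hX']
        rcases eq_or_ne j (τ i) with h | h
        · subst h
          rw [if_pos rfl, mul_one]
          have h1 : X' i (τ i) = X i (τ i) - z₀ := by
            simp [hX']
          have := hz₀min i
          omega
        · simp [h]
      have hz₀le : z₀ ≤ n := by
        rw [← hrow i₀]
        exact Finset.single_le_sum (f := fun j => X i₀ j) (fun j _ => Nat.zero_le _)
          (Finset.mem_univ (τ i₀))
      have hrow' : ∀ i, ∑ j, X' i j = n - z₀ := by
        intro i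
        have : (∑ j, X' i j) + z₀ = n := by
          rw [← hrow i]
          have : ∑ j, X i j = ∑ j, (X' i j + z₀ * (if j = τ i then 1 else 0)) :=
            Finset.sum_congr rfl (fun j _ => hX'add i j)
          rw [this, Finset.sum_add_distrib]
          congr 1
          simp
        omega
      have hcol' : ∀ j, ∑ i, X' i j = n - z₀ := by
        intro j
        have hind : ∑ i, z₀ * (if j = τ i then 1 else 0) = z₀ := by
          have : ∀ i, (if j = τ i then (1:ℕ) else 0) = (if i = τ.symm j then 1 else 0) := by
            intro i
            congr 1
            · simp only [eq_iff_iff]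
              constructor
              · intro h; rw [h]; simp
              · intro h; rw [h]; simp
          calc ∑ i, z₀ * (if j = τ i then (1:ℕ) else 0)
              = ∑ i, z₀ * (if i = τ.symm j then 1 else 0) := by
                apply Finset.sum_congr rfl; intro i _; rw [this i]
            _ = z₀ := by simp
        have : (∑ i, X' i j) + z₀ = n := by
          rw [← hcol j]
          have h2 : ∑ i, X i j = ∑ i, (X' i j + z₀ * (if j = τ i then 1 else 0)) :=
            Finset.sum_congr rfl (fun i _ => hX'add i j)
          rw [h2, Finset.sum_add_distrib, hind]
        omega
      obtain ⟨r', σ', z', c', hpos', hsum', hdec', hsupp', hcell', htri'⟩ :=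
        IH (n - z₀) (by omega) X' hrow' hcol'
      refine ⟨r' + 1, Fin.cons τ σ', Fin.cons z₀ z', Fin.cons (i₀, τ i₀) c',
        ?_, ?_, ?_, ?_, ?_, ?_⟩
      · intro k
        induction k using Fin.cases with
        | zero => simpa using hz₀pos
        | succ k => simpa using hpos' k
      · rw [Fin.sum_cons, hsum']; omega
      · intro i j
        rw [Fin.sum_univ_succ]
        simp only [Fin.cons_zero, Fin.cons_succ]
        rw [← hdec' i j, hX'add i j]
        omega
      · intro k i
        induction k using Fin.cases with
        | zero => simpa using hτ i
        | succ k =>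
          have h1 := hsupp' k i
          have h2 : X' i (σ' k i) ≤ X i (σ' k i) := Nat.sub_le _ _
          simp only [Fin.cons_succ]
          omega
      · intro k
        induction k using Fin.cases with
        | zero => simp
        | succ k => simpa using hcell' k
      · intro k l hkl
        induction k using Fin.cases with
        | zero =>
          induction l using Fin.cases with
          | zero => exact absurd hkl (lt_irrefl _)
          | succ l =>
            simp only [Fin.cons_zero, Fin.cons_succ]
            intro hEq
            have h1 := hsupp' l i₀
            have h2 : X' i₀ (τ i₀) = 0 := by
              have hx : X' i₀ (τ i₀) = X i₀ (τ i₀) - z₀ := by simp [hX']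
              omega
            rw [← hEq] at h1
            omega
        | succ k =>
          induction l using Fin.cases with
          | zero => exact absurd hkl (by simp [Fin.lt_def])
          | succ l =>
            simp only [Fin.cons_succ]
            exact htri' k l (by rwa [Fin.succ_lt_succ_iff] at hkl)

/-- Injectivity of "top-left block + (0, last) corner" coordinates on matrices with
    all row sums and all column sums equal to `t`. -/
lemma key_inj {m' : ℕ} (M : Matrix (Fin (m' + 1)) (Fin (m' + 1)) ℚ) (t : ℚ)
    (hrow : ∀ i, ∑ j, M i j = t) (hcol : ∀ j, ∑ i, M i j = t)
    (hblock : ∀ i j : Fin m', M i.castSucc j.castSucc = 0)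
    (hcorner : M 0 (Fin.last m') = 0) : M = 0 := by
  have hlastrow : ∀ j : Fin m', M (Fin.last m') j.castSucc = t := by
    intro j
    have h := hcol j.castSucc
    rw [Fin.sum_univ_castSucc] at h
    simp only [hblock] at h
    simpa using h
  have hlastcol : ∀ i : Fin m', M i.castSucc (Fin.last m') = t := by
    intro i
    have h := hrow i.castSucc
    rw [Fin.sum_univ_castSucc] at h
    simp only [hblock] at h
    simpa using h
  have ht : t = 0 := by
    cases m' with
    | zero =>
      have h := hrow 0
      have h0 : (Fin.last 0) = (0 : Fin 1) := rfl
      rw [h0] at hcorner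
      simpa [Fin.sum_univ_succ, hcorner] using h.symm
    | succ k =>
      have := hlastcol 0
      rw [Fin.castSucc_zero] at this
      rw [hcorner] at this
      exact this.symm
  have hcornerlast : M (Fin.last m') (Fin.last m') = 0 := by
    have h := hrow (Fin.last m')
    rw [Fin.sum_univ_castSucc] at h
    have h2 : ∑ j : Fin m', M (Fin.last m') j.castSucc = m' * t := by
      rw [Finset.sum_congr rfl (fun j _ => hlastrow j)]
      simp [mul_comm]
    rw [h2, ht] at h
    simpa using h
  ext i j
  simp only [Matrix.zero_apply]
  rcases Fin.eq_castSucc_or_eq_last i with ⟨i', rfl⟩ | rfl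
  · rcases Fin.eq_castSucc_or_eq_last j with ⟨j', rfl⟩ | rfl
    · exact hblock i' j'
    · rw [hlastcol i', ht]
  · rcases Fin.eq_castSucc_or_eq_last j with ⟨j', rfl⟩ | rfl
    · rw [hlastrow j', ht]
    · exact hcornerlast

theorem position_matrix_decomposition (m n : ℕ) (hm : 0 < m) (hn : 0 < n)
    (X : Matrix (Fin m) (Fin m) ℕ)
    (hrow : ∀ i, ∑ j, X i j = n) (hcol : ∀ j, ∑ i, X i j = n) :
    ∃ (r : ℕ) (P : Fin r → Matrix (Fin m) (Fin m) ℕ) (z : Fin r → ℕ),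
      0 < r ∧ (r : ℤ) ≤ (m : ℤ) ^ 2 - 2 * m + 2 ∧
      Function.Injective P ∧ (∀ k, IsPermMatrix (P k)) ∧
      (∀ k, 0 < z k) ∧ (∑ k, z k = n) ∧ X = ∑ k, z k • P k := by
  classical
  obtain ⟨m', rfl⟩ : ∃ m', m = m' + 1 := ⟨m - 1, by omega⟩
  obtain ⟨r, σ, z, c, hpos, hsum, hdec, hsupp, hcell, htri⟩ :=
    greedy (m' + 1) hm n X hrow hcol
  set P : Fin r → Matrix (Fin (m' + 1)) (Fin (m' + 1)) ℕ :=
    fun k => Matrix.of fun i j => if j = σ k i then 1 else 0 with hP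
  have hPapp : ∀ k i j, P k i j = if j = σ k i then 1 else 0 := fun k i j => rfl
  -- distinctness (from the killed cells)
  have hlt : ∀ k l, k < l → P k ≠ P l := by
    intro k l hkl hEq
    have h1 : P k (c k).1 (c k).2 = 1 := by
      rw [hPapp, if_pos (hcell k)]
    have h2 : P l (c k).1 (c k).2 = 0 := by
      rw [hPapp, if_neg (htri k l hkl)]
    rw [hEq, h2] at h1
    exact one_ne_zero h1.symm
  have hPinj : Function.Injective P := by
    intro k l h
    by_contra hne
    rcases Ne.lt_or_gt hne with h' | h'
    · exact hlt k l h' h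
    · exact hlt l k h' h.symm
  -- linear independence in a space of dimension m'^2 + 1
  set v : Fin r → (Matrix (Fin m') (Fin m') ℚ × ℚ) :=
    fun k => (Matrix.of fun i j =>
        if (j.castSucc : Fin (m' + 1)) = σ k i.castSucc then (1 : ℚ) else 0,
      if (Fin.last m' : Fin (m' + 1)) = σ k 0 then (1 : ℚ) else 0) with hv
  have hindep : LinearIndependent ℚ v := by
    rw [Fintype.linearIndependent_iff]
    intro g hg
    set N : Matrix (Fin (m' + 1)) (Fin (m' + 1)) ℚ :=
      Matrix.of fun i j => ∑ k, g k * (if j = σ k i then (1 : ℚ) else 0) with hN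
    have hNapp : ∀ i j, N i j = ∑ k, g k * (if j = σ k i then (1 : ℚ) else 0) :=
      fun i j => rfl
    have hNrow : ∀ i, ∑ j, N i j = ∑ k, g k := by
      intro i
      calc ∑ j, N i j = ∑ j, ∑ k, g k * (if j = σ k i then (1:ℚ) else 0) :=
            Finset.sum_congr rfl (fun j _ => hNapp i j)
        _ = ∑ k, ∑ j : Fin (m' + 1), g k * (if j = σ k i then (1:ℚ) else 0) :=
            Finset.sum_comm
        _ = ∑ k, g k := by
            apply Finset.sum_congr rfl
            intro k _
            rw [← Finset.mul_sum]
            simp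
    have hNcol : ∀ j, ∑ i, N i j = ∑ k, g k := by
      intro j
      rw [show ∑ i, N i j = ∑ i, ∑ k, g k * (if j = σ k i then (1:ℚ) else 0) from
        Finset.sum_congr rfl (fun i _ => hNapp i j), Finset.sum_comm]
      apply Finset.sum_congr rfl
      intro k _
      rw [← Finset.mul_sum]
      have : ∀ i : Fin (m' + 1), (if j = σ k i then (1:ℚ) else 0)
          = (if i = (σ k).symm j then 1 else 0) := by
        intro i
        congr 1
        simp only [eq_iff_iff]
        constructor
        · intro h; rw [h]; simp
        · intro h; rw [h]; simp
      rw [Finset.sum_congr rfl (fun i _ => this i)]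
      simp
    have hfst := congrArg Prod.fst hg
    have hsnd := congrArg Prod.snd hg
    simp only [Prod.fst_sum, Prod.snd_sum, Prod.smul_fst, Prod.smul_snd, Prod.fst_zero,
      Prod.snd_zero] at hfst hsnd
    have hblock : ∀ i j : Fin m', N i.castSucc j.castSucc = 0 := by
      intro i j
      have := congrFun (congrFun hfst i) j
      simp only [Matrix.sum_apply, Matrix.smul_apply, Matrix.zero_apply, smul_eq_mul] at this
      rw [hNapp]
      convert this using 2
      simp [hv]
    have hcorner : N 0 (Fin.last m') = 0 := by
      rw [hNapp]
      convert hsnd using 2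
      simp [hv]
    have hN0 : N = 0 := key_inj N (∑ k, g k) hNrow hNcol hblock hcorner
    -- triangular argument: minimal nonzero coefficient
    by_contra hgne
    push_neg at hgne
    obtain ⟨k₁, hk₁⟩ := hgne
    have hsne : (Finset.univ.filter (fun k => g k ≠ 0)).Nonempty :=
      ⟨k₁, by simp [hk₁]⟩
    obtain ⟨k₀, hk₀mem, hk₀min⟩ :=
      Finset.exists_min_image _ id hsne
    simp only [Finset.mem_filter, Finset.mem_univ, true_and] at hk₀mem
    have hzero : N (c k₀).1 (c k₀).2 = 0 := by rw [hN0]; rfl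
    rw [hNapp] at hzero
    have hsingle : ∑ k, g k * (if (c k₀).2 = σ k (c k₀).1 then (1:ℚ) else 0) = g k₀ := by
      rw [Finset.sum_eq_single k₀]
      · rw [if_pos (hcell k₀), mul_one]
      · intro b _ hb
        rcases Ne.lt_or_gt hb with hblt | hblt
        · have : g b = 0 := by
            by_contra hgb
            have := hk₀min b (by simp [hgb])
            simp only [id] at this
            exact absurd hblt (not_lt.mpr this)
          rw [this, zero_mul]
        · rw [if_neg (htri k₀ b hblt), mul_zero]
      · intro h
        exact absurd (Finset.mem_univ k₀) h
    rw [hsingle] at hzero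
    exact hk₀mem hzero
  have hrle : r ≤ m' * m' + 1 := by
    have h1 := hindep.fintype_card_le_finrank
    rw [Fintype.card_fin] at h1
    have h2 : Module.finrank ℚ (Matrix (Fin m') (Fin m') ℚ × ℚ) = m' * m' + 1 := by
      rw [Module.finrank_prod, Module.finrank_matrix, Module.finrank_self]
      simp
    rwa [h2] at h1
  refine ⟨r, P, z, ?_, ?_, hPinj, ?_, hpos, hsum, ?_⟩
  · rcases Nat.eq_zero_or_pos r with hr0 | hr
    · exfalso
      subst hr0
      rw [Finset.univ_eq_empty, Finset.sum_empty] at hsum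
      omega
    · exact hr
  · have : ((m' : ℤ) + 1) ^ 2 - 2 * ((m' : ℤ) + 1) + 2 = (m' : ℤ) * m' + 1 := by ring
    push_cast
    rw [this]
    exact_mod_cast hrle
  · exact fun k => ⟨σ k, fun i j => rfl⟩
  · ext i j
    rw [hdec i j, Matrix.sum_apply]
    apply Finset.sum_congr rfl
    intro k _
    rw [Matrix.smul_apply, hPapp, smul_eq_mul]
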